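/- Suppose that for the solution ({x_n},{y_n}) there exist constants M1, M3 > 0 and M4 ≥ M2 ≥ 0 such that x_n ≤ M1·y_n + M2 ≤ M3·x_n + M4 for all n ∈ ℕ. Suppose further that A > 0 and that there exists a positive integer η such that for every sequence {c_m}_{m=1}^∞ with c_m ∈ I_β ∪ I_γ for all m, there exist positive integers N1 ≤ N2 ≤ η with Σ_{m=N1}^{N2} c_m ∈ I_B ∪ I_C. Then there exist M > 0 and N ∈ ℕ such that x_n ≤ M and y_n ≤ M for all n > N. -/

import Mathlib

open Finset

/-- The index set of the coefficient function `f` on `{1, …, k}`: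
the set of indices `i ∈ {1, …, k}` with `f i > 0`. -/
noncomputable def indexSet (k : ℕ) (f : ℕ → ℝ) : Finset ℕ :=
  (Finset.Icc 1 k).filter fun i => 0 < f i

/-- The iteration condition: for every sequence `c` (indexed by `1, 2, …`)
taking values in `S`, there exist positive integers `N1 ≤ N2 ≤ η` such that
`∑_{m=N1}^{N2} c m ∈ T`. -/
def iterCond (η : ℕ) (S T : Finset ℕ) : Prop :=
  ∀ c : ℕ → ℕ, (∀ m, 1 ≤ m → c m ∈ S) →
    ∃ N1 N2 : ℕ, 0 < N1 ∧ N1 ≤ N2 ∧ N2 ≤ η ∧ (∑ m ∈ Finset.Icc N1 N2, c m) ∈ T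

set_option maxHeartbeats 4000000 in
theorem stmt_16
    (k : ℕ) (hk : 0 < k)
    (α A p q : ℝ) (β γ B C δ ε D E : ℕ → ℝ)
    (hα : 0 ≤ α) (hA : 0 ≤ A) (hp : 0 ≤ p) (hq : 0 ≤ q)
    (hβ : ∀ i, 0 ≤ β i) (hγ : ∀ i, 0 ≤ γ i) (hB : ∀ j, 0 ≤ B j) (hC : ∀ j, 0 ≤ C j)
    (hδ : ∀ i, 0 ≤ δ i) (hε : ∀ i, 0 ≤ ε i) (hD : ∀ j, 0 ≤ D j) (hE : ∀ j, 0 ≤ E j)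
    (x y : ℕ → ℝ)
    (hxnn : ∀ n, 0 ≤ x n) (hynn : ∀ n, 0 ≤ y n)
    (hxden : ∀ n, k ≤ n →
      0 < A + ∑ j ∈ Icc 1 k, B j * x (n - j) + ∑ j ∈ Icc 1 k, C j * y (n - j))
    (hyden : ∀ n, k ≤ n →
      0 < q + ∑ j ∈ Icc 1 k, D j * x (n - j) + ∑ j ∈ Icc 1 k, E j * y (n - j))
    (hxrec : ∀ n, k ≤ n → x n =
      (α + ∑ i ∈ Icc 1 k, β i * x (n - i) + ∑ i ∈ Icc 1 k, γ i * y (n - i)) /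
      (A + ∑ j ∈ Icc 1 k, B j * x (n - j) + ∑ j ∈ Icc 1 k, C j * y (n - j)))
    (hyrec : ∀ n, k ≤ n → y n =
      (p + ∑ i ∈ Icc 1 k, δ i * x (n - i) + ∑ i ∈ Icc 1 k, ε i * y (n - i)) /
      (q + ∑ j ∈ Icc 1 k, D j * x (n - j) + ∑ j ∈ Icc 1 k, E j * y (n - j)))
    (M1 M2 M3 M4 : ℝ) (hM1 : 0 < M1) (hM3 : 0 < M3)
    (hM2 : 0 ≤ M2) (hM24 : M2 ≤ M4)
    (hcmp : ∀ n, x n ≤ M1 * y n + M2 ∧ M1 * y n + M2 ≤ M3 * x n + M4)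
    (hApos : 0 < A)
    (hη : ∃ η : ℕ, 0 < η ∧
      iterCond η (indexSet k β ∪ indexSet k γ) (indexSet k B ∪ indexSet k C)) :
    ∃ M : ℝ, 0 < M ∧ ∃ N : ℕ, ∀ n, N < n → x n ≤ M ∧ y n ≤ M := by
  classical
  obtain ⟨η, hηpos, hiter⟩ := hη
  have hM4 : 0 ≤ M4 := hM2.trans hM24
  have hyx : ∀ n, y n ≤ (M3 * x n + M4) / M1 := by
    intro n
    rw [le_div_iff₀ hM1]
    linarith [(hcmp n).2]
  have hxy : ∀ n, (x n - M2) / M1 ≤ y n := by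
    intro n
    rw [div_le_iff₀ hM1]
    linarith [(hcmp n).1]
  by_cases hI : (indexSet k β ∪ indexSet k γ).Nonempty
  case neg =>
    have hz : ∀ i ∈ Icc 1 k, β i = 0 ∧ γ i = 0 := by
      intro i hi
      constructor
      · by_contra hbi
        exact hI ⟨i, Finset.mem_union_left _ (Finset.mem_filter.2
          ⟨hi, lt_of_le_of_ne (hβ i) (Ne.symm hbi)⟩)⟩
      · by_contra hgi
        exact hI ⟨i, Finset.mem_union_right _ (Finset.mem_filter.2
          ⟨hi, lt_of_le_of_ne (hγ i) (Ne.symm hgi)⟩)⟩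
    have hxb : ∀ n, k ≤ n → x n ≤ α / A := by
      intro n hn
      rw [hxrec n hn]
      have h1 : (∑ i ∈ Icc 1 k, β i * x (n - i)) = 0 :=
        Finset.sum_eq_zero fun i hi => by rw [(hz i hi).1]; ring
      have h2 : (∑ i ∈ Icc 1 k, γ i * y (n - i)) = 0 :=
        Finset.sum_eq_zero fun i hi => by rw [(hz i hi).2]; ring
      rw [h1, h2, add_zero, add_zero]
      have hS1 : 0 ≤ ∑ j ∈ Icc 1 k, B j * x (n - j) :=
        Finset.sum_nonneg fun j _ => mul_nonneg (hB j) (hxnn _)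
      have hS2 : 0 ≤ ∑ j ∈ Icc 1 k, C j * y (n - j) :=
        Finset.sum_nonneg fun j _ => mul_nonneg (hC j) (hynn _)
      have hAle : A ≤ A + ∑ j ∈ Icc 1 k, B j * x (n - j) + ∑ j ∈ Icc 1 k, C j * y (n - j) := by
        linarith
      exact div_le_div_of_nonneg_left hα hApos hAle
    have hQ : (0:ℝ) ≤ α / A := div_nonneg hα hA
    have hR : (0:ℝ) ≤ (M3 * (α / A) + M4) / M1 := by positivity
    refine ⟨α / A + (M3 * (α / A) + M4) / M1 + 1, by linarith, k, fun n hn => ?_⟩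
    have hxn := hxb n hn.le
    constructor
    · linarith
    · have h1 := hyx n
      have h2 : (M3 * x n + M4) / M1 ≤ (M3 * (α / A) + M4) / M1 := by
        apply div_le_div_of_nonneg_right ?_ hM1.le
        linarith [mul_le_mul_of_nonneg_left hxn hM3.le]
      linarith
  case pos =>
  obtain ⟨i0, hi0⟩ := hI
  have hM31 : (0:ℝ) ≤ M3 / M1 := by positivity
  obtain ⟨β', hβ'def⟩ : ∃ f : ℕ → ℝ, f = fun i => β i + γ i * (M3 / M1) := ⟨_, rfl⟩
  have hβ'eq : ∀ i, β' i = β i + γ i * (M3 / M1) := fun i => by rw [hβ'def]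
  have hβ'nn : ∀ i, 0 ≤ β' i := fun i =>
    (hβ'eq i) ▸ add_nonneg (hβ i) (mul_nonneg (hγ i) hM31)
  have hI'mem : ∀ i ∈ indexSet k β ∪ indexSet k γ, i ∈ Icc 1 k ∧ 0 < β' i := by
    intro i hi
    rcases Finset.mem_union.1 hi with h | h <;> obtain ⟨h1, h2⟩ := Finset.mem_filter.1 h
    · refine ⟨h1, ?_⟩
      rw [hβ'eq i]
      have := mul_nonneg (hγ i) hM31
      linarith
    · refine ⟨h1, ?_⟩
      rw [hβ'eq i]
      have : 0 < γ i * (M3 / M1) := mul_pos h2 (div_pos hM3 hM1)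
      have := hβ i
      linarith
  have hI'zero : ∀ i ∈ Icc 1 k, i ∉ indexSet k β ∪ indexSet k γ → β' i = 0 := by
    intro i hi hni
    have hb : ¬ 0 < β i := fun h => hni (Finset.mem_union_left _ (Finset.mem_filter.2 ⟨hi, h⟩))
    have hg : ¬ 0 < γ i := fun h => hni (Finset.mem_union_right _ (Finset.mem_filter.2 ⟨hi, h⟩))
    have hb' : β i = 0 := le_antisymm (not_lt.1 hb) (hβ i)
    have hg' : γ i = 0 := le_antisymm (not_lt.1 hg) (hγ i)
    rw [hβ'eq i, hb', hg']
    ring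
  obtain ⟨Sβ, hSβdef⟩ : ∃ a : ℝ, a = ∑ i ∈ Icc 1 k, β' i := ⟨_, rfl⟩
  have hSβ : 0 < Sβ := by
    rw [hSβdef]
    exact Finset.sum_pos' (fun i _ => hβ'nn i) ⟨i0, (hI'mem i0 hi0).1, (hI'mem i0 hi0).2⟩
  obtain ⟨α', hα'def⟩ : ∃ a : ℝ, a = α + (∑ i ∈ Icc 1 k, γ i) * (M4 / M1) := ⟨_, rfl⟩
  have hα'nn : 0 ≤ α' := by
    have h1 : (0:ℝ) ≤ ∑ i ∈ Icc 1 k, γ i := Finset.sum_nonneg fun i _ => hγ i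
    have h2 : (0:ℝ) ≤ (∑ i ∈ Icc 1 k, γ i) * (M4 / M1) := mul_nonneg h1 (by positivity)
    linarith [hα'def]
  -- numerator bound
  have hNum : ∀ n,
      α + (∑ i ∈ Icc 1 k, β i * x (n - i)) + (∑ i ∈ Icc 1 k, γ i * y (n - i)) ≤
      α' + ∑ i ∈ Icc 1 k, β' i * x (n - i) := by
    intro n
    have key : ∀ i, γ i * y (n - i) ≤ γ i * (M3 / M1) * x (n - i) + γ i * (M4 / M1) := by
      intro i
      have h := mul_le_mul_of_nonneg_left (hyx (n - i)) (hγ i)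
      have e : γ i * ((M3 * x (n - i) + M4) / M1)
          = γ i * (M3 / M1) * x (n - i) + γ i * (M4 / M1) := by
        field_simp
      linarith [e ▸ h]
    have h1 : (∑ i ∈ Icc 1 k, γ i * y (n - i)) ≤
        ∑ i ∈ Icc 1 k, (γ i * (M3 / M1) * x (n - i) + γ i * (M4 / M1)) :=
      Finset.sum_le_sum fun i _ => key i
    have h2 : ∑ i ∈ Icc 1 k, (γ i * (M3 / M1) * x (n - i) + γ i * (M4 / M1))
        = (∑ i ∈ Icc 1 k, γ i * (M3 / M1) * x (n - i)) + (∑ i ∈ Icc 1 k, γ i) * (M4 / M1) := by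
      rw [Finset.sum_add_distrib, Finset.sum_mul]
    have h3 : (∑ i ∈ Icc 1 k, β i * x (n - i)) + (∑ i ∈ Icc 1 k, γ i * (M3 / M1) * x (n - i))
        = ∑ i ∈ Icc 1 k, β' i * x (n - i) := by
      rw [← Finset.sum_add_distrib]
      exact Finset.sum_congr rfl fun i _ => by rw [hβ'eq i]; ring
    rw [hα'def]
    linarith
  -- max bound for the β' sum
  have hSmax : ∀ n, ∃ c ∈ indexSet k β ∪ indexSet k γ,
      (∑ i ∈ Icc 1 k, β' i * x (n - i)) ≤ Sβ * x (n - c) := by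
    intro n
    obtain ⟨c, hcmem, hcmax⟩ :=
      (indexSet k β ∪ indexSet k γ).exists_max_image (fun i => x (n - i)) ⟨i0, hi0⟩
    refine ⟨c, hcmem, ?_⟩
    rw [hSβdef, Finset.sum_mul]
    apply Finset.sum_le_sum
    intro i hi
    by_cases hmem : i ∈ indexSet k β ∪ indexSet k γ
    · exact mul_le_mul_of_nonneg_left (hcmax i hmem) (hβ'nn i)
    · rw [hI'zero i hi hmem]
      simp
  -- A * x n ≤ numerator
  have hAxle : ∀ n, k ≤ n → A * x n ≤
      α + (∑ i ∈ Icc 1 k, β i * x (n - i)) + (∑ i ∈ Icc 1 k, γ i * y (n - i)) := by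
    intro n hn
    have hden := hxden n hn
    have heq : x n * (A + ∑ j ∈ Icc 1 k, B j * x (n - j) + ∑ j ∈ Icc 1 k, C j * y (n - j))
        = α + (∑ i ∈ Icc 1 k, β i * x (n - i)) + (∑ i ∈ Icc 1 k, γ i * y (n - i)) := by
      rw [hxrec n hn]
      exact div_mul_cancel₀ _ hden.ne'
    have hS1 : 0 ≤ ∑ j ∈ Icc 1 k, B j * x (n - j) :=
      Finset.sum_nonneg fun j _ => mul_nonneg (hB j) (hxnn _)
    have hS2 : 0 ≤ ∑ j ∈ Icc 1 k, C j * y (n - j) :=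
      Finset.sum_nonneg fun j _ => mul_nonneg (hC j) (hynn _)
    have hAD : x n * A ≤ x n * (A + ∑ j ∈ Icc 1 k, B j * x (n - j) +
        ∑ j ∈ Icc 1 k, C j * y (n - j)) :=
      mul_le_mul_of_nonneg_left (by linarith) (hxnn n)
    linarith [hAD]
  -- one-step descent
  obtain ⟨phi, hphidef⟩ : ∃ f : ℝ → ℝ, f = fun t => (A * t - α') / Sβ := ⟨_, rfl⟩
  have hphieq : ∀ t, phi t = (A * t - α') / Sβ := fun t => by rw [hphidef]
  have hL1 : ∀ n, k ≤ n → ∃ c ∈ indexSet k β ∪ indexSet k γ, phi (x n) ≤ x (n - c) := by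
    intro n hn
    obtain ⟨c, hcmem, hcs⟩ := hSmax n
    refine ⟨c, hcmem, ?_⟩
    have h1 : A * x n ≤ α' + Sβ * x (n - c) := (hAxle n hn).trans ((hNum n).trans (by linarith))
    rw [hphieq, div_le_iff₀ hSβ]
    linarith
  have hphimono : StrictMono phi := by
    intro a b hab
    rw [hphieq, hphieq]
    apply div_lt_div_of_pos_right ?_ hSβ
    linarith [mul_pos hApos (sub_pos.2 hab)]
  obtain ⟨phiInv, hphiInvdef⟩ : ∃ f : ℝ → ℝ, f = fun u => (Sβ * u + α') / A := ⟨_, rfl⟩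
  have hphiInveq : ∀ u, phiInv u = (Sβ * u + α') / A := fun u => by rw [hphiInvdef]
  have hphi_phiInv : ∀ u, phi (phiInv u) = u := by
    intro u
    rw [hphieq, hphiInveq]
    field_simp
    ring
  have hIterGe : ∀ m : ℕ, ∀ u t : ℝ, phiInv^[m] u ≤ t → u ≤ phi^[m] t := by
    intro m
    induction m with
    | zero => intro u t h; simpa using h
    | succ m ih =>
      intro u t h
      rw [Function.iterate_succ_apply] at h
      have h2 : phiInv u ≤ phi^[m] t := ih (phiInv u) t h
      rw [Function.iterate_succ_apply']
      calc u = phi (phiInv u) := (hphi_phiInv u).symm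
        _ ≤ phi (phi^[m] t) := hphimono.monotone h2
  -- constants
  obtain ⟨b0, hb0def⟩ : ∃ a : ℝ, a = α' / A := ⟨_, rfl⟩
  have hb0nn : 0 ≤ b0 := hb0def ▸ div_nonneg hα'nn hA
  obtain ⟨ρ, hρdef⟩ : ∃ a : ℝ, a = max 1 (Sβ / A) := ⟨_, rfl⟩
  have hρ1 : (1:ℝ) ≤ ρ := hρdef ▸ le_max_left _ _
  have hρSA : Sβ / A ≤ ρ := hρdef ▸ le_max_right _ _
  have hρ0 : (0:ℝ) ≤ ρ := le_trans zero_le_one hρ1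
  -- growth bound on phiInv iterates
  have hphiInvBound : ∀ (u : ℝ), 0 ≤ u → ∀ m : ℕ,
      0 ≤ phiInv^[m] u ∧ phiInv^[m] u ≤ ρ ^ m * u + (m : ℝ) * b0 * ρ ^ m := by
    intro u hu m
    induction m with
    | zero => simpa using hu
    | succ m ih =>
      obtain ⟨ih0, ihb⟩ := ih
      rw [Function.iterate_succ_apply']
      have hv := hphiInveq (phiInv^[m] u)
      constructor
      · rw [hv]
        exact div_nonneg (add_nonneg (mul_nonneg hSβ.le ih0) hα'nn) hA
      · rw [hv]
        have hSρA : Sβ ≤ ρ * A := by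
          rw [div_le_iff₀ hApos] at hρSA
          linarith
        have hstep : (Sβ * phiInv^[m] u + α') / A ≤ ρ * phiInv^[m] u + b0 := by
          rw [div_le_iff₀ hApos, hb0def]
          have hb : α' / A * A = α' := div_mul_cancel₀ _ hApos.ne'
          have hmono : Sβ * phiInv^[m] u ≤ (ρ * A) * phiInv^[m] u :=
            mul_le_mul_of_nonneg_right hSρA ih0
          have he : (ρ * phiInv^[m] u + α' / A) * A = (ρ * A) * phiInv^[m] u + α' / A * A := by
            ring
          rw [he, hb]
          linarith
        have hρm1 : (1:ℝ) ≤ ρ ^ (m + 1) := one_le_pow₀ hρ1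
        have hρmnn : (0:ℝ) ≤ ρ ^ m := pow_nonneg hρ0 m
        have hco : ρ * (ρ ^ m * u + (m : ℝ) * b0 * ρ ^ m) + b0
            ≤ ρ ^ (m+1) * u + ((m:ℕ) + 1 : ℝ) * b0 * ρ ^ (m+1) := by
          have e : ρ * (ρ ^ m * u + (m : ℝ) * b0 * ρ ^ m)
              = ρ ^ (m+1) * u + (m : ℝ) * b0 * ρ ^ (m+1) := by ring
          rw [e]
          have hbb : b0 * 1 ≤ b0 * ρ ^ (m + 1) := mul_le_mul_of_nonneg_left hρm1 hb0nn
          have e2 : ((m:ℕ) + 1 : ℝ) * b0 * ρ ^ (m+1)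
              = (m : ℝ) * b0 * ρ ^ (m+1) + b0 * ρ ^ (m+1) := by push_cast; ring
          rw [e2]
          linarith
        have hmul : ρ * phiInv^[m] u ≤ ρ * (ρ ^ m * u + (m : ℝ) * b0 * ρ ^ m) :=
          mul_le_mul_of_nonneg_left ihb hρ0
        push_cast
        push_cast at hco
        linarith
  -- T_BC nonempty and Bmin
  have hTne : (indexSet k B ∪ indexSet k C).Nonempty := by
    obtain ⟨N1, N2, _, _, _, hmem⟩ := hiter (fun _ => i0) (fun m _ => hi0)
    exact ⟨_, hmem⟩
  obtain ⟨Bmin, hBmindef⟩ : ∃ a : ℝ,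
      a = (indexSet k B ∪ indexSet k C).inf' hTne (fun s => B s + C s / M1) := ⟨_, rfl⟩
  have hBminpos : 0 < Bmin := by
    rw [hBmindef]
    rw [Finset.lt_inf'_iff]
    intro s hs
    rcases Finset.mem_union.1 hs with h | h <;> obtain ⟨h1, h2⟩ := Finset.mem_filter.1 h
    · have : 0 ≤ C s / M1 := div_nonneg (hC s) hM1.le
      linarith
    · have : 0 < C s / M1 := div_pos h2 hM1
      have := hB s
      linarith
  have hBminle : ∀ s ∈ indexSet k B ∪ indexSet k C, Bmin ≤ B s + C s / M1 := by
    intro s hs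
    rw [hBmindef]
    exact Finset.inf'_le _ hs
  have hTBC_Icc : ∀ s ∈ indexSet k B ∪ indexSet k C, s ∈ Icc 1 k := by
    intro s hs
    rcases Finset.mem_union.1 hs with h | h <;> exact (Finset.mem_filter.1 h).1
  obtain ⟨c0, hc0def⟩ : ∃ a : ℝ, a = (∑ j ∈ Icc 1 k, C j) * (M2 / M1) := ⟨_, rfl⟩
  have hc0nn : 0 ≤ c0 := by
    rw [hc0def]
    exact mul_nonneg (Finset.sum_nonneg fun j _ => hC j) (by positivity)
  -- product inequality (L4)
  have hL4 : ∀ n, k ≤ n → ∀ s ∈ indexSet k B ∪ indexSet k C,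
      ∃ c ∈ indexSet k β ∪ indexSet k γ,
        Bmin * x (n - s) * x n ≤ α' + Sβ * x (n - c) + c0 * x n := by
    intro n hn s hs
    obtain ⟨c, hcmem, hcs⟩ := hSmax n
    refine ⟨c, hcmem, ?_⟩
    have hsIcc := hTBC_Icc s hs
    have hden := hxden n hn
    have heq : x n * (A + ∑ j ∈ Icc 1 k, B j * x (n - j) + ∑ j ∈ Icc 1 k, C j * y (n - j))
        = α + (∑ i ∈ Icc 1 k, β i * x (n - i)) + (∑ i ∈ Icc 1 k, γ i * y (n - i)) := by
      rw [hxrec n hn]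
      exact div_mul_cancel₀ _ hden.ne'
    have hBsum : B s * x (n - s) ≤ ∑ j ∈ Icc 1 k, B j * x (n - j) :=
      Finset.single_le_sum (fun j _ => mul_nonneg (hB j) (hxnn _)) hsIcc
    have hCsum : C s * y (n - s) ≤ ∑ j ∈ Icc 1 k, C j * y (n - j) :=
      Finset.single_le_sum (fun j _ => mul_nonneg (hC j) (hynn _)) hsIcc
    have hyge : C s * ((x (n - s) - M2) / M1) ≤ C s * y (n - s) :=
      mul_le_mul_of_nonneg_left (hxy (n - s)) (hC s)
    have hexp : C s * ((x (n - s) - M2) / M1) = (C s / M1) * x (n - s) - C s * (M2 / M1) := by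
      field_simp
    have hCle : C s * (M2 / M1) ≤ c0 := by
      rw [hc0def]
      exact mul_le_mul_of_nonneg_right
        (Finset.single_le_sum (fun j _ => hC j) hsIcc) (by positivity)
    have hBs : Bmin ≤ B s + C s / M1 := hBminle s hs
    have hxs := hxnn (n - s)
    have hBsx : Bmin * x (n - s) ≤ (B s + C s / M1) * x (n - s) :=
      mul_le_mul_of_nonneg_right hBs hxs
    -- denominator lower bound
    have hdenge : A + Bmin * x (n - s) - c0 ≤
        A + ∑ j ∈ Icc 1 k, B j * x (n - j) + ∑ j ∈ Icc 1 k, C j * y (n - j) := by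
      linarith [hBsx, hyge, hCle, hBsum, hCsum]
    have hnum := (hNum n).trans (by linarith : α' + (∑ i ∈ Icc 1 k, β' i * x (n - i)) ≤
        α' + Sβ * x (n - c))
    have hx0 := hxnn n
    have hkey := mul_le_mul_of_nonneg_left hdenge hx0
    have hAx : 0 ≤ A * x n := mul_nonneg hA hx0
    linarith [hkey, heq, hnum, hAx]
  -- chain lemma
  have hchain : ∀ n, k * (η + 1) ≤ n → ∃ c : ℕ → ℕ,
      (∀ j, 1 ≤ j → c j ∈ indexSet k β ∪ indexSet k γ) ∧
      ∀ m, m ≤ η → phi^[m] (x n) ≤ x (n - ∑ j ∈ Icc 1 m, c j) := by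
    intro n hn
    have hkη : k * (η + 1) = k * η + k := by ring
    suffices h : ∀ Mm, Mm ≤ η → ∃ c : ℕ → ℕ,
        (∀ j, 1 ≤ j → c j ∈ indexSet k β ∪ indexSet k γ) ∧
        ∀ m, m ≤ Mm → phi^[m] (x n) ≤ x (n - ∑ j ∈ Icc 1 m, c j) from h η le_rfl
    intro Mm
    induction Mm with
    | zero =>
      intro _
      refine ⟨fun _ => i0, fun _ _ => hi0, ?_⟩
      intro m hm
      interval_cases m
      simp
    | succ Mm ihm =>
      intro hMm
      obtain ⟨c, hcm, hcv⟩ := ihm (Nat.le_of_succ_le hMm)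
      have hcle : ∀ j, 1 ≤ j → c j ≤ k := by
        intro j hj
        exact (Finset.mem_Icc.1 (hI'mem _ (hcm j hj)).1).2
      have hsum_le : (∑ j ∈ Icc 1 Mm, c j) ≤ k * Mm := by
        calc (∑ j ∈ Icc 1 Mm, c j) ≤ ∑ _j ∈ Icc 1 Mm, k :=
              Finset.sum_le_sum fun j hj => hcle j (Finset.mem_Icc.1 hj).1
          _ = Mm * k := by rw [Finset.sum_const, Nat.card_Icc]; simp [Nat.smul_one_eq_cast]
          _ = k * Mm := Nat.mul_comm _ _
      have hsMle : (∑ j ∈ Icc 1 Mm, c j) ≤ k * η :=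
        hsum_le.trans (Nat.mul_le_mul_left k (Nat.le_of_succ_le hMm))
      have hkn : k ≤ n - ∑ j ∈ Icc 1 Mm, c j := by omega
      obtain ⟨c', hc'm, hc'v⟩ := hL1 (n - ∑ j ∈ Icc 1 Mm, c j) hkn
      refine ⟨fun j => if j = Mm + 1 then c' else c j, ?_, ?_⟩
      · intro j hj
        by_cases h : j = Mm + 1
        · simpa [h] using hc'm
        · simpa [h] using hcm j hj
      · intro m hm
        rcases Nat.lt_or_ge m (Mm + 1) with h | h
        · have hm' : m ≤ Mm := Nat.lt_succ_iff.1 h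
          have he : (∑ j ∈ Icc 1 m, if j = Mm + 1 then c' else c j) = ∑ j ∈ Icc 1 m, c j :=
            Finset.sum_congr rfl fun j hj => if_neg (by
              have := (Finset.mem_Icc.1 hj).2; omega)
          rw [he]
          exact hcv m hm'
        · have hm' : m = Mm + 1 := le_antisymm hm h
          subst hm'
          rw [Finset.sum_Icc_succ_top (Nat.succ_le_succ (Nat.zero_le Mm))]
          have he : (∑ j ∈ Icc 1 Mm, if j = Mm + 1 then c' else c j) = ∑ j ∈ Icc 1 Mm, c j :=
            Finset.sum_congr rfl fun j hj => if_neg (by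
              have := (Finset.mem_Icc.1 hj).2; omega)
          rw [he, if_pos rfl, ← Nat.sub_sub]
          rw [Function.iterate_succ_apply']
          exact (hphimono.monotone (hcv Mm le_rfl)).trans hc'v
  -- remaining constants
  obtain ⟨G, hGdef⟩ : ∃ a : ℝ, a = 1 + ∑ j ∈ Finset.range (k * (η + 1)), x j := ⟨_, rfl⟩
  have hG1 : (1:ℝ) ≤ G := by
    rw [hGdef]
    have : (0:ℝ) ≤ ∑ j ∈ Finset.range (k * (η + 1)), x j :=
      Finset.sum_nonneg fun j _ => hxnn j
    linarith
  have hGx : ∀ j, j < k * (η + 1) → x j < G := by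
    intro j hj
    have h1 : x j ≤ ∑ i ∈ Finset.range (k * (η + 1)), x i :=
      Finset.single_le_sum (fun i _ => hxnn i) (Finset.mem_range.2 hj)
    rw [hGdef]
    linarith
  obtain ⟨P, hPdef⟩ : ∃ a : ℝ, a = ρ ^ η := ⟨_, rfl⟩
  obtain ⟨Q, hQdef⟩ : ∃ a : ℝ, a = ρ ^ η * ((η : ℝ) * b0) := ⟨_, rfl⟩
  have hP1 : (1:ℝ) ≤ P := hPdef ▸ one_le_pow₀ hρ1
  have hP0 : (0:ℝ) ≤ P := le_trans zero_le_one hP1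
  have hQ0 : (0:ℝ) ≤ Q := by
    rw [hQdef]
    positivity
  obtain ⟨K, hKdef⟩ : ∃ a : ℝ, a = c0 + α' + Sβ * P + Sβ * Q + Sβ * G := ⟨_, rfl⟩
  have hK0 : 0 ≤ K := by
    rw [hKdef]
    have h1 : 0 ≤ Sβ * P := mul_nonneg hSβ.le hP0
    have h2 : 0 ≤ Sβ * Q := mul_nonneg hSβ.le hQ0
    have h3 : 0 ≤ Sβ * G := mul_nonneg hSβ.le (by linarith)
    linarith
  obtain ⟨Ψ, hΨdef⟩ : ∃ a : ℝ, a = 1 + K / Bmin := ⟨_, rfl⟩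
  have hΨ1 : (1:ℝ) ≤ Ψ := by
    rw [hΨdef]
    have : 0 ≤ K / Bmin := div_nonneg hK0 hBminpos.le
    linarith
  have hΨ0 : (0:ℝ) ≤ Ψ := le_trans zero_le_one hΨ1
  have hBΨ : Bmin * Ψ = Bmin + K := by
    rw [hΨdef]
    field_simp
  obtain ⟨T0, hT0def⟩ : ∃ a : ℝ, a = max (P * Ψ + Q) G := ⟨_, rfl⟩
  have hT0G : G ≤ T0 := hT0def ▸ le_max_right _ _
  have hT0PQ : P * Ψ + Q ≤ T0 := hT0def ▸ le_max_left _ _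
  have hT0sum : T0 ≤ P * Ψ + Q + G := by
    rw [hT0def]
    apply max_le
    · linarith
    · have : 0 ≤ P * Ψ := mul_nonneg hP0 hΨ0
      linarith
  -- F3 : descent inequality
  have hc0lt : c0 < Bmin * Ψ := by
    rw [hKdef] at hBΨ
    have h1 : 0 ≤ Sβ * P := mul_nonneg hSβ.le hP0
    have h2 : 0 ≤ Sβ * Q := mul_nonneg hSβ.le hQ0
    have h3 : 0 ≤ Sβ * G := mul_nonneg hSβ.le (by linarith)
    linarith
  have hdesc : Sβ * T0 + α' + c0 * Ψ ≤ Bmin * Ψ * Ψ := by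
    have e1 : Bmin * Ψ * Ψ = (Bmin + K) * Ψ := by rw [hBΨ]
    have e2 : Sβ * T0 ≤ Sβ * (P * Ψ + Q + G) := mul_le_mul_of_nonneg_left hT0sum hSβ.le
    have hq1 : 0 ≤ (Ψ - 1) * α' := mul_nonneg (by linarith) hα'nn
    have hq2 : 0 ≤ (Ψ - 1) * (Sβ * Q) := mul_nonneg (by linarith) (mul_nonneg hSβ.le hQ0)
    have hq3 : 0 ≤ (Ψ - 1) * (Sβ * G) := mul_nonneg (by linarith)
      (mul_nonneg hSβ.le (by linarith))
    have hq4 : 0 ≤ Bmin * Ψ := mul_nonneg hBminpos.le hΨ0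
    rw [hKdef] at e1
    linarith
  -- F2
  have hphiT0 : ∀ m, m ≤ η → Ψ ≤ phi^[m] T0 := by
    intro m hm
    apply hIterGe m Ψ T0
    obtain ⟨_, hub⟩ := hphiInvBound Ψ hΨ0 m
    have hρm : ρ ^ m ≤ ρ ^ η := pow_le_pow_right₀ hρ1 hm
    have hρmnn : (0:ℝ) ≤ ρ ^ m := pow_nonneg hρ0 m
    have hmb : (m : ℝ) * b0 * ρ ^ m ≤ (η : ℝ) * b0 * ρ ^ η := by
      have hmη : (m : ℝ) ≤ (η : ℝ) := Nat.cast_le.2 hm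
      have h0m : (0:ℝ) ≤ (m : ℝ) := Nat.cast_nonneg m
      have s1 : (m : ℝ) * b0 * ρ ^ m ≤ (η : ℝ) * b0 * ρ ^ m :=
        mul_le_mul_of_nonneg_right (mul_le_mul_of_nonneg_right hmη hb0nn) hρmnn
      have s2 : (η : ℝ) * b0 * ρ ^ m ≤ (η : ℝ) * b0 * ρ ^ η := by
        apply mul_le_mul_of_nonneg_left hρm
        exact mul_nonneg (Nat.cast_nonneg η) hb0nn
      linarith
    have hρmΨ : ρ ^ m * Ψ ≤ ρ ^ η * Ψ := mul_le_mul_of_nonneg_right hρm hΨ0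
    have : phiInv^[m] Ψ ≤ P * Ψ + Q := by
      rw [hPdef, hQdef]
      linarith
    linarith
  -- main boundedness claim
  have main : ∀ n, x n ≤ T0 := by
    intro n
    induction n using Nat.strong_induction_on with
    | _ n ih =>
    by_contra hlt
    push_neg at hlt
    have hnge : k * (η + 1) ≤ n := by
      by_contra hsm
      push_neg at hsm
      have := hGx n hsm
      linarith
    obtain ⟨c, hcmem, hcval⟩ := hchain n hnge
    obtain ⟨N1, N2, hN1pos, hN12, hN2η, hsmem⟩ := hiter c hcmem
    have hcle : ∀ j, 1 ≤ j → c j ≤ k := fun j hj =>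
      (Finset.mem_Icc.1 (hI'mem _ (hcmem j hj)).1).2
    have hsum_le : ∀ m, m ≤ η → (∑ j ∈ Icc 1 m, c j) ≤ k * η := by
      intro m hm
      calc (∑ j ∈ Icc 1 m, c j) ≤ ∑ _j ∈ Icc 1 m, k :=
            Finset.sum_le_sum fun j hj => hcle j (Finset.mem_Icc.1 hj).1
        _ = m * k := by rw [Finset.sum_const, Nat.card_Icc]; simp [Nat.smul_one_eq_cast]
        _ ≤ η * k := Nat.mul_le_mul_right k hm
        _ = k * η := Nat.mul_comm _ _
    have hN11η : N1 - 1 ≤ η := by omega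
    have hs1le : (∑ j ∈ Icc 1 (N1 - 1), c j) ≤ k * η := hsum_le _ hN11η
    have hs2le : (∑ j ∈ Icc 1 N2, c j) ≤ k * η := hsum_le _ hN2η
    have hkηn : k * η + k ≤ n := by
      have : k * (η + 1) = k * η + k := by ring
      omega
    have hsplit : (∑ j ∈ Icc 1 (N1 - 1), c j) + (∑ j ∈ Icc N1 N2, c j)
        = ∑ j ∈ Icc 1 N2, c j := by
      have e1 : Icc 1 (N1 - 1) = Ioc 0 (N1 - 1) := Finset.Icc_add_one_left_eq_Ioc 0 _
      have e2 : Icc N1 N2 = Ioc (N1 - 1) N2 := by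
        rw [← Finset.Icc_add_one_left_eq_Ioc]
        congr 1
        omega
      have e3 : Icc 1 N2 = Ioc 0 N2 := Finset.Icc_add_one_left_eq_Ioc 0 _
      rw [e1, e2, e3]
      exact Finset.sum_Ioc_consecutive _ (Nat.zero_le _) (by omega)
    have hn1k : k ≤ n - ∑ j ∈ Icc 1 (N1 - 1), c j := by omega
    -- strict chain values
    have hv1 : Ψ < x (n - ∑ j ∈ Icc 1 (N1 - 1), c j) := by
      have h1 : phi^[N1 - 1] T0 < phi^[N1 - 1] (x n) := (hphimono.iterate (N1 - 1)) hlt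
      exact lt_of_le_of_lt (hphiT0 _ hN11η) (lt_of_lt_of_le h1 (hcval _ hN11η))
    have hv2 : Ψ < x (n - ∑ j ∈ Icc 1 N2, c j) := by
      have h1 : phi^[N2] T0 < phi^[N2] (x n) := (hphimono.iterate N2) hlt
      exact lt_of_le_of_lt (hphiT0 _ hN2η) (lt_of_lt_of_le h1 (hcval _ hN2η))
    obtain ⟨d, hdmem, hprod⟩ := hL4 (n - ∑ j ∈ Icc 1 (N1 - 1), c j) hn1k
      (∑ j ∈ Icc N1 N2, c j) hsmem
    rw [Nat.sub_sub, hsplit] at hprod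
    -- derive a value exceeding T0 at an earlier index
    have hxc : T0 < x (n - (∑ j ∈ Icc 1 (N1 - 1), c j) - d) := by
      have hx1 := hxnn (n - ∑ j ∈ Icc 1 (N1 - 1), c j)
      have hA1 : (Bmin * Ψ - c0) * x (n - ∑ j ∈ Icc 1 (N1 - 1), c j) ≤
          (Bmin * x (n - ∑ j ∈ Icc 1 N2, c j) - c0) * x (n - ∑ j ∈ Icc 1 (N1 - 1), c j) := by
        have : Bmin * Ψ ≤ Bmin * x (n - ∑ j ∈ Icc 1 N2, c j) :=
          mul_le_mul_of_nonneg_left hv2.le hBminpos.le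
        linarith [mul_le_mul_of_nonneg_right this hx1]
      have hA2 : (Bmin * Ψ - c0) * Ψ < (Bmin * Ψ - c0) * x (n - ∑ j ∈ Icc 1 (N1 - 1), c j) :=
        mul_lt_mul_of_pos_left hv1 (by linarith)
      have hA3 : (Bmin * x (n - ∑ j ∈ Icc 1 N2, c j) - c0) *
          x (n - ∑ j ∈ Icc 1 (N1 - 1), c j) ≤
          α' + Sβ * x (n - (∑ j ∈ Icc 1 (N1 - 1), c j) - d) := by linarith [hprod]
      have hfin : Sβ * T0 < Sβ * x (n - (∑ j ∈ Icc 1 (N1 - 1), c j) - d) := by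
        linarith [hdesc, hA1, hA2, hA3]
      exact lt_of_mul_lt_mul_left (by linarith) hSβ.le
    have hd1 : 1 ≤ d := (Finset.mem_Icc.1 (hI'mem d hdmem).1).1
    have hlt2 : n - (∑ j ∈ Icc 1 (N1 - 1), c j) - d < n := by omega
    exact absurd (ih _ hlt2) (not_le.2 hxc)
  -- conclusion
  have hT01 : (1:ℝ) ≤ T0 := le_trans hG1 hT0G
  have hyT : ∀ n, y n ≤ (M3 * T0 + M4) / M1 := by
    intro n
    have h1 := hyx n
    have h2 : (M3 * x n + M4) / M1 ≤ (M3 * T0 + M4) / M1 := by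
      apply div_le_div_of_nonneg_right ?_ hM1.le
      linarith [mul_le_mul_of_nonneg_left (main n) hM3.le]
    linarith
  have hR : (0:ℝ) ≤ (M3 * T0 + M4) / M1 := by
    apply div_nonneg ?_ hM1.le
    linarith [mul_nonneg hM3.le (le_trans zero_le_one hT01)]
  refine ⟨T0 + (M3 * T0 + M4) / M1 + 1, by linarith, 0, fun n _ => ?_⟩
  exact ⟨by linarith [main n], by linarith [hyT n]⟩
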